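/- Let T be a tree on p vertices, let T_CL be the Chow-Liu tree built from n samples, and suppose there exist edges f=(w,w̃) and g=(u,ũ) such that f ∈ E_T, f ∉ E_{T_CL}, g ∈ E_{T_CL}, g ∉ E_T, f ∈ path_T(u,ũ), and g ∈ path_{T_CL}(w,w̃). Then (∑_{i=1}^n Z^{(i)}_{f,u,ũ})·(∑_{i=1}^n Y^{(i)}_{f,u,ũ}) ≤ 0, where Z_{f,u,ũ} = X_w X_{w̃} − X_u X_{ũ} and Y_{f,u,ũ} = X_w X_{w̃} + X_u X_{ũ} evaluated on each sample. -/

import Mathlib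

open Finset
open scoped Classical

noncomputable section

/-- A spin configuration on `p` vertices; `true ↦ +1`, `false ↦ -1`. -/
abbrev Conf (p : ℕ) := Fin p → Bool

/-- The real spin value of a Boolean variable. -/
def spin (b : Bool) : ℝ := if b then 1 else -1

/-- `P` is a probability distribution on `Conf p`. -/
def IsDist {p : ℕ} (P : Conf p → ℝ) : Prop :=
  (∀ x, 0 ≤ P x) ∧ ∑ x : Conf p, P x = 1

/-- Pairwise correlation `μ_{ij} = E_P[X_i X_j]`. -/
def corr {p : ℕ} (P : Conf p → ℝ) (i j : Fin p) : ℝ :=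
  ∑ x : Conf p, P x * spin (x i) * spin (x j)

/-- The Ising energy `∑_{(i,j) ∈ E} θ_{ij} x_i x_j` (each edge counted once, via `i < j`). -/
def energy {p : ℕ} (G : SimpleGraph (Fin p)) (θ : Fin p → Fin p → ℝ) (x : Conf p) : ℝ :=
  ∑ i : Fin p, ∑ j : Fin p, if G.Adj i j ∧ i < j then θ i j * spin (x i) * spin (x j) else 0

/-- The zero-field Ising model on graph `G` with parameters `θ`:
`P(x) = exp(∑_{(i,j)∈E} θ_{ij} x_i x_j - Φ(θ))`. -/
def ising {p : ℕ} (G : SimpleGraph (Fin p)) (θ : Fin p → Fin p → ℝ) : Conf p → ℝ :=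
  fun x => Real.exp (energy G θ x) / ∑ y : Conf p, Real.exp (energy G θ y)

/-- `P ∈ 𝒫_G(α, β)`: zero-field Ising model on `G` with `α ≤ |θ_{ij}| ≤ β` on edges. -/
def MemIsing {p : ℕ} (G : SimpleGraph (Fin p)) (α β : ℝ) (P : Conf p → ℝ) : Prop :=
  ∃ θ : Fin p → Fin p → ℝ, (∀ i j, θ i j = θ j i) ∧
    (∀ i j, G.Adj i j → α ≤ |θ i j| ∧ |θ i j| ≤ β) ∧ P = ising G θ

/-- `P ∈ 𝒫_G`: zero-field Ising model on `G`, no constraint on parameter strength. -/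
def MemIsingAll {p : ℕ} (G : SimpleGraph (Fin p)) (P : Conf p → ℝ) : Prop :=
  ∃ θ : Fin p → Fin p → ℝ, (∀ i j, θ i j = θ j i) ∧ P = ising G θ

/-- Marginal of `P` on the pair `(i, j)` evaluated at `(a, b)`. -/
def margPair {p : ℕ} (P : Conf p → ℝ) (i j : Fin p) (a b : Bool) : ℝ :=
  ∑ x : Conf p, if x i = a ∧ x j = b then P x else 0

/-- Total variation distance between the `(i,j)`-pairwise marginals of `P` and `Q`. -/
def tvPair {p : ℕ} (P Q : Conf p → ℝ) (i j : Fin p) : ℝ :=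
  (1/2) * ∑ a : Bool, ∑ b : Bool, |margPair P i j a b - margPair Q i j a b|

/-- The small-set TV loss `L^(2)(P,Q)`: sup over two-element subsets of vertices of the TV
distance between the corresponding marginals. -/
def L2 {p : ℕ} (P Q : Conf p → ℝ) : ℝ :=
  ⨆ i : Fin p, ⨆ j : Fin p, ⨆ _ : i ≠ j, tvPair P Q i j

/-- Probability, under `n` i.i.d. samples from `P`, of the event `E`. -/
def Pr {p n : ℕ} (P : Conf p → ℝ) (E : (Fin n → Conf p) → Prop) : ℝ :=
  ∑ xs : Fin n → Conf p, if E xs then ∏ l : Fin n, P (xs l) else 0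

/-- The empirical distribution of the samples `xs`. -/
def empDist {p n : ℕ} (xs : Fin n → Conf p) : Conf p → ℝ :=
  fun x => ((Finset.univ.filter fun l => xs l = x).card : ℝ) / n

/-- Total weight of the edges of `G` under the weight function `w`. -/
def graphWeight {p : ℕ} (G : SimpleGraph (Fin p)) (w : Fin p → Fin p → ℝ) : ℝ :=
  ∑ i : Fin p, ∑ j : Fin p, if G.Adj i j ∧ i < j then w i j else 0

/-- `G` is a maximum-weight spanning tree for the weights `w` on the complete graph. -/
def IsMaxSpanningTree {p : ℕ} (w : Fin p → Fin p → ℝ) (G : SimpleGraph (Fin p)) : Prop :=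
  G.IsTree ∧ ∀ G' : SimpleGraph (Fin p), G'.IsTree → graphWeight G' w ≤ graphWeight G w

/-- `G` is a Chow–Liu tree for the samples `xs`: a maximum-weight spanning tree for the
weights `|μ̂_{ij}|` given by empirical correlations. -/
def IsChowLiu {p n : ℕ} (xs : Fin n → Conf p) (G : SimpleGraph (Fin p)) : Prop :=
  IsMaxSpanningTree (fun i j => |corr (empDist xs) i j|) G

/-- The reverse I-projection `Π_G(P)` of `P` onto zero-field Ising models on the tree
(or forest) `G`: the product-form distribution with uniform singleton marginals matching the
pairwise correlations of `P` across the edges of `G`. -/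
def proj {p : ℕ} (G : SimpleGraph (Fin p)) (P : Conf p → ℝ) : Conf p → ℝ :=
  fun x => ((1:ℝ)/2)^p *
    ∏ i : Fin p, ∏ j : Fin p,
      if G.Adj i j ∧ i < j then 1 + corr P i j * spin (x i) * spin (x j) else 1

/-- The edge `(a,b)` of `G` lies on the (unique, when `G` is a tree) path in `G` between
`u` and `v`: it is an edge whose removal disconnects `u` from `v`. -/
def onPath {p : ℕ} (G : SimpleGraph (Fin p)) (u v a b : Fin p) : Prop :=
  G.Adj a b ∧ ¬ (G.deleteEdges {s(a, b)}).Reachable u v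

/-- Product of `f` over the edges on the path in `G` between `u` and `v`. -/
def pathProd {p : ℕ} (G : SimpleGraph (Fin p)) (f : Fin p → Fin p → ℝ) (u v : Fin p) : ℝ :=
  ∏ i : Fin p, ∏ j : Fin p, if onPath G u v i j ∧ i < j then f i j else 1

/-- Product of `f` over the edges on the path in `G` between `u` and `v`, excluding the
edge `(a,b)`. -/
def pathProdExcl {p : ℕ} (G : SimpleGraph (Fin p)) (f : Fin p → Fin p → ℝ)
    (u v a b : Fin p) : ℝ :=
  ∏ i : Fin p, ∏ j : Fin p,
    if onPath G u v i j ∧ i < j ∧ s(i, j) ≠ s(a, b) then f i j else 1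

/-- Inverse hyperbolic tangent. -/
def atanh (x : ℝ) : ℝ := (1/2) * Real.log ((1 + x) / (1 - x))

end


lemma walk_reach {p : ℕ} {T : SimpleGraph (Fin p)} (u u' : Fin p) {v x : Fin p}
    (P : T.Walk v x)
    (hx : (T.deleteEdges {s(u,u')}).Reachable x u ∨ (T.deleteEdges {s(u,u')}).Reachable x u') :
    (T.deleteEdges {s(u,u')}).Reachable v u ∨ (T.deleteEdges {s(u,u')}).Reachable v u' := by
  induction P with
  | nil => exact hx
  | @cons a b c h P ih =>
    have hx' := ih hx
    by_cases he : s(a, b) = s(u, u')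
    · rw [Sym2.eq_iff] at he
      rcases he with ⟨rfl, rfl⟩ | ⟨rfl, rfl⟩
      · exact Or.inl (SimpleGraph.Reachable.refl _)
      · exact Or.inr (SimpleGraph.Reachable.refl _)
    · have hadj : (T.deleteEdges {s(u,u')}).Adj a b := by
        rw [SimpleGraph.deleteEdges_adj]
        exact ⟨h, by simpa using he⟩
      rcases hx' with h1 | h1
      · exact Or.inl (hadj.reachable.trans h1)
      · exact Or.inr (hadj.reachable.trans h1)

lemma corr_symm {p : ℕ} (P : Conf p → ℝ) (i j : Fin p) : corr P i j = corr P j i := by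
  unfold corr
  refine Finset.sum_congr rfl fun x _ => by ring

lemma corr_empDist {p n : ℕ} (xs : Fin n → Conf p) (i j : Fin p) :
    corr (empDist xs) i j = (∑ l : Fin n, spin (xs l i) * spin (xs l j)) / n := by
  classical
  unfold corr empDist
  calc ∑ x : Conf p, ((Finset.univ.filter fun l => xs l = x).card : ℝ) / n
          * spin (x i) * spin (x j)
      = ∑ x : Conf p, ∑ l : Fin n,
          (if xs l = x then spin (x i) * spin (x j) / n else 0) := by
        refine Finset.sum_congr rfl fun x _ => ?_
        rw [← Finset.sum_filter, Finset.sum_const, nsmul_eq_mul]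
        ring
    _ = ∑ l : Fin n, ∑ x : Conf p,
          (if xs l = x then spin (x i) * spin (x j) / n else 0) := Finset.sum_comm
    _ = ∑ l : Fin n, spin (xs l i) * spin (xs l j) / n := by
        refine Finset.sum_congr rfl fun l _ => ?_
        simp
    _ = (∑ l : Fin n, spin (xs l i) * spin (xs l j)) / n := by
        rw [Finset.sum_div]

lemma chowliu_swap {p n : ℕ} (T : SimpleGraph (Fin p)) (xs : Fin n → Conf p)
    (hCL : IsChowLiu xs T) (w w' u u' : Fin p)
    (hww : w < w') (huu : u < u')
    (hfn : ¬ T.Adj w w') (hg : T.Adj u u')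
    (hgp : ¬ (T.deleteEdges {s(u,u')}).Reachable w w') :
    |corr (empDist xs) w w'| ≤ |corr (empDist xs) u u'| := by
  classical
  have hCL' : IsMaxSpanningTree (fun i j => |corr (empDist xs) i j|) T := hCL
  set wt : Fin p → Fin p → ℝ := fun i j => |corr (empDist xs) i j| with hwt
  have hne : w ≠ w' := ne_of_lt hww
  have hune : u ≠ u' := ne_of_lt huu
  have hfg : s(w,w') ≠ s(u,u') := by
    intro hq
    rw [Sym2.eq_iff] at hq
    rcases hq with ⟨rfl, rfl⟩ | ⟨rfl, rfl⟩
    · exact hfn hg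
    · exact absurd hww (asymm huu)
  set T' : SimpleGraph (Fin p) :=
    T.deleteEdges {s(u,u')} ⊔ SimpleGraph.fromEdgeSet {s(w,w')} with hT'
  have hT'adj : ∀ i j, T'.Adj i j ↔
      (T.Adj i j ∧ s(i,j) ≠ s(u,u')) ∨ (s(i,j) = s(w,w') ∧ i ≠ j) := by
    intro i j
    simp [hT', SimpleGraph.deleteEdges_adj, SimpleGraph.fromEdgeSet_adj]
  have hconn : T.Connected := hCL'.1.isConnected
  have hreach : ∀ v : Fin p,
      (T.deleteEdges {s(u,u')}).Reachable v u ∨ (T.deleteEdges {s(u,u')}).Reachable v u' := by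
    intro v
    rcases hconn.preconnected v u with ⟨P⟩
    exact walk_reach u u' P (Or.inl (SimpleGraph.Reachable.refl _))
  have hdle : T.deleteEdges {s(u,u')} ≤ T' := le_sup_left
  have hfadj : T'.Adj w w' := (hT'adj w w').mpr (Or.inr ⟨rfl, hne⟩)
  have huureach : T'.Reachable u u' := by
    rcases hreach w with h1 | h1 <;> rcases hreach w' with h2 | h2
    · exact absurd (h1.trans h2.symm) hgp
    · exact ((h1.mono hdle).symm.trans (hfadj.reachable)).trans (h2.mono hdle)
    · exact ((h2.mono hdle).symm.trans (hfadj.symm.reachable)).trans (h1.mono hdle)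
    · exact absurd (h1.trans h2.symm) hgp
  have hkey : ∀ v : Fin p, T'.Reachable v u := by
    intro v
    rcases hreach v with h1 | h1
    · exact h1.mono hdle
    · exact (h1.mono hdle).trans huureach.symm
  have hconn' : T'.Connected := by
    rw [SimpleGraph.connected_iff]
    exact ⟨fun a b => (hkey a).trans (hkey b).symm, ⟨w⟩⟩
  have hacyc : T'.IsAcyclic := by
    intro v c hc
    by_cases hfe : s(w,w') ∈ c.edges
    · have h2 := SimpleGraph.adj_and_reachable_delete_edges_iff_exists_cycle.mpr ⟨v, c, hc, hfe⟩
      refine hgp (h2.2.mono ?_)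
      intro a b hab
      rcases hab with ⟨hab1, hab2⟩
      rcases (hT'adj a b).mp hab1 with ⟨h3, h4⟩ | ⟨h3, h4⟩
      · exact (SimpleGraph.deleteEdges_adj ..).mpr
          ⟨h3, fun hm => h4 (Set.mem_singleton_iff.mp hm)⟩
      · exact absurd ((SimpleGraph.fromEdgeSet_adj _).mpr
          ⟨Set.mem_singleton_iff.mpr h3, hab1.ne⟩) hab2
    · have hall : ∀ e ∈ c.edges, e ∉ ({s(w,w')} : Set (Sym2 (Fin p))) := by
        intro e he
        simp only [Set.mem_singleton_iff]
        rintro rfl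
        exact hfe he
      have hc' : (c.toDeleteEdges {s(w,w')} hall).IsCycle := SimpleGraph.Walk.IsCycle.toDeleteEdges T' ({s(w,w')} : Set (Sym2 (Fin p))) hc hall
      have hle2 : T'.deleteEdges {s(w,w')} ≤ T := by
        intro a b hab
        rcases hab with ⟨hab1, hab2⟩
        rcases (hT'adj a b).mp hab1 with ⟨h3, _⟩ | ⟨h3, _⟩
        · exact h3
        · exact absurd ((SimpleGraph.fromEdgeSet_adj _).mpr
            ⟨Set.mem_singleton_iff.mpr h3, hab1.ne⟩) hab2
      have hcy := hc'.map (f := SimpleGraph.Hom.ofLE hle2)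
        (fun a b hab => hab)
      exact hCL'.1.IsAcyclic _ hcy
  have hT'tree : T'.IsTree := ⟨hconn', hacyc⟩
  have hwle : graphWeight T' wt ≤ graphWeight T wt := hCL'.2 T' hT'tree
  have egen : ∀ (a b : Fin p), (∑ i : Fin p, ∑ j : Fin p,
      (if i = a ∧ j = b then wt i j else 0)) = wt a b := by
    intro a b
    rw [Finset.sum_eq_single a]
    · rw [Finset.sum_eq_single b]
      · simp
      · intro c _ hc; simp [hc]
      · simp
    · intro c _ hc; simp [hc]
    · simp
  have hpt : ∀ i j : Fin p,
      (if T'.Adj i j ∧ i < j then wt i j else 0) + (if i = u ∧ j = u' then wt i j else 0)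
    = (if T.Adj i j ∧ i < j then wt i j else 0) + (if i = w ∧ j = w' then wt i j else 0) := by
    intro i j
    by_cases h1 : i = u ∧ j = u'
    · simp only [h1.1, h1.2]
      have hT'n : ¬ T'.Adj u u' := by
        rw [hT'adj]
        rintro (⟨_, h4⟩ | ⟨h3, _⟩)
        · exact h4 rfl
        · exact hfg h3.symm
      have hn2 : ¬ (u = w ∧ u' = w') := by
        rintro ⟨rfl, rfl⟩
        exact hfg rfl
      simp [hT'n, hn2, hg, huu]
    · by_cases h2 : i = w ∧ j = w'
      · simp only [h2.1, h2.2]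
        have hn1 : ¬ (w = u ∧ w' = u') := by
          rintro ⟨rfl, rfl⟩
          exact hfg rfl
        simp [hfadj, hww, hfn, hn1]
      · have hiff : (T'.Adj i j ∧ i < j) ↔ (T.Adj i j ∧ i < j) := by
          constructor
          · rintro ⟨ha, hij⟩
            refine ⟨?_, hij⟩
            rcases (hT'adj i j).mp ha with ⟨h3, _⟩ | ⟨h3, _⟩
            · exact h3
            · rw [Sym2.eq_iff] at h3
              rcases h3 with ⟨rfl, rfl⟩ | ⟨rfl, rfl⟩
              · exact absurd ⟨rfl, rfl⟩ h2
              · exact absurd (hij.trans hww) (lt_irrefl _)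
          · rintro ⟨ha, hij⟩
            refine ⟨(hT'adj i j).mpr (Or.inl ⟨ha, ?_⟩), hij⟩
            intro hq
            rw [Sym2.eq_iff] at hq
            rcases hq with ⟨rfl, rfl⟩ | ⟨rfl, rfl⟩
            · exact h1 ⟨rfl, rfl⟩
            · exact absurd (hij.trans huu) (lt_irrefl _)
        simp only [if_neg h1, if_neg h2, add_zero]
        rw [if_congr hiff rfl rfl]
  have hsum : graphWeight T' wt + wt u u' = graphWeight T wt + wt w w' := by
    have hcg : (∑ i : Fin p, ∑ j : Fin p,
        ((if T'.Adj i j ∧ i < j then wt i j else 0) + (if i = u ∧ j = u' then wt i j else 0)))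
      = ∑ i : Fin p, ∑ j : Fin p,
        ((if T.Adj i j ∧ i < j then wt i j else 0) + (if i = w ∧ j = w' then wt i j else 0)) :=
      Finset.sum_congr rfl fun i _ => Finset.sum_congr rfl fun j _ => hpt i j
    simp only [Finset.sum_add_distrib] at hcg
    rw [egen, egen] at hcg
    unfold graphWeight
    convert hcg using 2 <;>
      exact Finset.sum_congr rfl fun i _ => Finset.sum_congr rfl fun j _ =>
        ite_congr rfl (fun _ => rfl) (fun _ => rfl)
  show wt w w' ≤ wt u u'
  linarith

/-- Sign of the product of the `Z` and `Y` statistics at an error.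
Let `T` be a tree on `p` vertices and `T_CL` a Chow–Liu tree built from `n` samples.
Suppose `f = (w,w̃) ∈ E_T \ E_{T_CL}` and `g = (u,ũ) ∈ E_{T_CL} \ E_T` with
`f ∈ path_T(u,ũ)` and `g ∈ path_{T_CL}(w,w̃)`. Then
`(∑_i Z⁽ⁱ⁾_{f,u,ũ})·(∑_i Y⁽ⁱ⁾_{f,u,ũ}) ≤ 0`. -/
theorem ZY_product_nonpos
    (p n : ℕ) (G T : SimpleGraph (Fin p)) (xs : Fin n → Conf p)
    (hG : G.IsTree) (hCL : IsChowLiu xs T)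
    (w w' u u' : Fin p)
    (hf : G.Adj w w') (hfn : ¬ T.Adj w w')
    (hg : T.Adj u u') (hgn : ¬ G.Adj u u')
    (hfp : onPath G u u' w w') (hgp : onPath T w w' u u') :
    (∑ i : Fin n, (spin (xs i w) * spin (xs i w') - spin (xs i u) * spin (xs i u'))) *
    (∑ i : Fin n, (spin (xs i w) * spin (xs i w') + spin (xs i u) * spin (xs i u')))
      ≤ 0 := by
  classical
  have hcorr : |corr (empDist xs) w w'| ≤ |corr (empDist xs) u u'| := by
    have hfn' : ¬ T.Adj w' w := fun h => hfn h.symm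
    have hgp1 : ¬ (T.deleteEdges {s(u,u')}).Reachable w w' := hgp.2
    have hgp2 : ¬ (T.deleteEdges {s(u',u)}).Reachable w w' := by
      rw [Sym2.eq_swap]; exact hgp.2
    have hgp3 : ¬ (T.deleteEdges {s(u,u')}).Reachable w' w := fun h => hgp.2 h.symm
    have hgp4 : ¬ (T.deleteEdges {s(u',u)}).Reachable w' w := by
      rw [Sym2.eq_swap]; exact hgp3
    rcases lt_or_gt_of_ne hf.ne with hw1 | hw1 <;>
      rcases lt_or_gt_of_ne hg.ne with hu1 | hu1
    · exact chowliu_swap T xs hCL w w' u u' hw1 hu1 hfn hg hgp1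
    · have h := chowliu_swap T xs hCL w w' u' u hw1 hu1 hfn hg.symm hgp2
      rwa [corr_symm (empDist xs) u' u] at h
    · have h := chowliu_swap T xs hCL w' w u u' hw1 hu1 hfn' hg hgp3
      rwa [corr_symm (empDist xs) w' w] at h
    · have h := chowliu_swap T xs hCL w' w u' u hw1 hu1 hfn' hg.symm hgp4
      rwa [corr_symm (empDist xs) w' w, corr_symm (empDist xs) u' u] at h
  rcases Nat.eq_zero_or_pos n with rfl | hn
  · simp
  · rw [corr_empDist, corr_empDist, abs_div, abs_div, Nat.abs_cast] at hcorr
    have hnn : (0:ℝ) < n := by exact_mod_cast hn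
    set A := ∑ i : Fin n, spin (xs i w) * spin (xs i w') with hA
    set B := ∑ i : Fin n, spin (xs i u) * spin (xs i u') with hB
    have hAB : |A| ≤ |B| := by
      have h := mul_le_mul_of_nonneg_right hcorr hnn.le
      rwa [div_mul_cancel₀ _ hnn.ne', div_mul_cancel₀ _ hnn.ne'] at h
    have h2 : A * A ≤ B * B := by
      have h := mul_self_le_mul_self (abs_nonneg A) hAB
      rwa [abs_mul_abs_self, abs_mul_abs_self] at h
    have h3 : (∑ i : Fin n, (spin (xs i w) * spin (xs i w') - spin (xs i u) * spin (xs i u')))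
        = A - B := by rw [Finset.sum_sub_distrib]
    have h4 : (∑ i : Fin n, (spin (xs i w) * spin (xs i w') + spin (xs i u) * spin (xs i u')))
        = A + B := by rw [Finset.sum_add_distrib]
    rw [h3, h4]
    nlinarith [h2]
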